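/- Suppose H₁⁺ ⊆ H₁ satisfies (J₁f, f)₁ ≥ κ₁‖f‖₁² (κ₁ > 0) for all f ∈ H₁⁺ and H₂⁻ ⊆ H₂ satisfies (J₂g, g)₂ ≤ −κ₂‖g‖₂² (κ₂ > 0) for all g ∈ H₂⁻, where J₁, J₂ are bounded symmetric involutions. Then for every u in the closed subspace H₁⁺ ⊗ H₂⁻ of H₁ ⊗ H₂, one has ((J₁⊗J₂)u, u) ≤ −κ₁κ₂‖u‖². -/

import Mathlib

open scoped InnerProductSpace ComplexConjugate ComplexOrder
open Matrix
open Finset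

lemma aux_posSemidef_of_form {n : Type*} [Fintype n] (M : Matrix n n ℂ)
    (hherm : M.IsHermitian)
    (h : ∀ c : n → ℂ, 0 ≤ (∑ x, ∑ y, conj (c x) * M x y * c y).re) :
    M.PosSemidef := by
  refine Matrix.PosSemidef.of_dotProduct_mulVec_nonneg hherm fun c => ?_
  have hd : dotProduct (star c) (M *ᵥ c) = ∑ x, ∑ y, conj (c x) * M x y * c y := by
    simp [dotProduct, Matrix.mulVec, Finset.mul_sum, mul_assoc]
  rw [hd, Complex.le_def]
  constructor
  · simpa using h c
  · -- imaginary part zero: the sum is self-conjugate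
    have hc : conj (∑ x, ∑ y, conj (c x) * M x y * c y)
        = ∑ x, ∑ y, conj (c x) * M x y * c y := by
      rw [map_sum]
      rw [Finset.sum_comm]
      refine Finset.sum_congr rfl fun x _ => ?_
      rw [map_sum]
      refine Finset.sum_congr rfl fun y _ => ?_
      have hm : conj (M x y) = M y x := by
        conv_rhs => rw [← hherm]
        simp [Matrix.conjTranspose_apply]
      simp only [_root_.map_mul, RingHom.coe_coe, Complex.conj_conj, hm]
      ring
    have := Complex.conj_eq_iff_im.mp hc
    simpa using this.symm

lemma aux_re_sum_mul_nonneg {n : Type*} [Fintype n] (M N : Matrix n n ℂ)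
    (hM : M.PosSemidef) (hN : N.PosSemidef) :
    0 ≤ (∑ x, ∑ y, M x y * N x y).re := by
  obtain ⟨B, rfl⟩ : ∃ B : Matrix n n ℂ, N = Bᴴ * B := by
    classical
    open scoped MatrixOrder in
    simpa [Matrix.star_eq_conjTranspose] using CStarAlgebra.nonneg_iff_eq_star_mul_self.mp hN.nonneg
  have key : ∀ k, 0 ≤ (∑ x, ∑ y, conj (B k x) * M x y * B k y).re := by
    intro k
    have h0 := hM.dotProduct_mulVec_nonneg (fun i => B k i)
    have hd : star (fun i => B k i) ⬝ᵥ M *ᵥ (fun i => B k i)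
        = ∑ x, ∑ y, conj (B k x) * M x y * B k y := by
      simp [dotProduct, Matrix.mulVec, Finset.mul_sum, mul_assoc]
    rw [hd] at h0
    simpa using (Complex.le_def.mp h0).1
  have hrw : (∑ x, ∑ y, M x y * (Bᴴ * B) x y)
      = ∑ k, ∑ x, ∑ y, conj (B k x) * M x y * B k y := by
    have e1 : (∑ x, ∑ y, M x y * (Bᴴ * B) x y)
        = ∑ x, ∑ y, ∑ k, conj (B k x) * M x y * B k y := by
      refine Finset.sum_congr rfl fun x _ => Finset.sum_congr rfl fun y _ => ?_
      simp only [Matrix.mul_apply, Matrix.conjTranspose_apply, Finset.mul_sum]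
      exact Finset.sum_congr rfl fun k _ => by simp only [Complex.star_def]; ring
    calc (∑ x, ∑ y, M x y * (Bᴴ * B) x y)
        = ∑ x, ∑ y, ∑ k, conj (B k x) * M x y * B k y := e1
      _ = ∑ x, ∑ k, ∑ y, conj (B k x) * M x y * B k y :=
          Finset.sum_congr rfl fun x _ => Finset.sum_comm
      _ = ∑ k, ∑ x, ∑ y, conj (B k x) * M x y * B k y := Finset.sum_comm
  rw [hrw, Complex.re_sum]
  exact Finset.sum_nonneg fun k _ => key k

lemma aux_inner_sum {E : Type*} [NormedAddCommGroup E] [InnerProductSpace ℂ E]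
    {n : Type*} [Fintype n] (v w : n → E) :
    ⟪∑ x, v x, ∑ y, w y⟫_ℂ = ∑ x, ∑ y, ⟪v x, w y⟫_ℂ := by
  rw [sum_inner]
  exact Finset.sum_congr rfl fun x _ => inner_sum _ _ _

lemma aux_expand {E : Type*} [NormedAddCommGroup E] [InnerProductSpace ℂ E]
    {n : Type*} [Fintype n] (c : n → ℂ) (v w : n → E) :
    ⟪∑ x, c x • v x, ∑ y, c y • w y⟫_ℂ
      = ∑ x, ∑ y, conj (c x) * ⟪v x, w y⟫_ℂ * c y := by
  rw [aux_inner_sum]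
  refine Finset.sum_congr rfl fun x _ => Finset.sum_congr rfl fun y _ => ?_
  rw [inner_smul_left, inner_smul_right]; ring

lemma aux_sum2 {n : Type*} [Fintype n] (f g : n → n → ℂ) (a : ℂ) :
    (∑ x, ∑ y, (-(f x y) + a * g x y))
      = -(∑ x, ∑ y, f x y) + a * (∑ x, ∑ y, g x y) := by
  simp [Finset.sum_add_distrib, Finset.mul_sum]

lemma aux_sum3 {n : Type*} [Fintype n] (f g : n → n → ℂ) (a : ℂ) :
    (∑ x, ∑ y, (f x y - a * g x y))
      = (∑ x, ∑ y, f x y) - a * (∑ x, ∑ y, g x y) := by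
  simp [Finset.sum_sub_distrib, Finset.mul_sum]

lemma aux_form_psd {E : Type*} [NormedAddCommGroup E] [InnerProductSpace ℂ E]
    {n : Type*} [Fintype n] (v : n → E) (T : E →L[ℂ] E)
    (hT : ∀ a b : E, ⟪T a, b⟫_ℂ = ⟪a, T b⟫_ℂ)
    (hpos : ∀ c : n → ℂ, 0 ≤ (⟪T (∑ x, c x • v x), ∑ x, c x • v x⟫_ℂ).re) :
    Matrix.PosSemidef (Matrix.of fun x y => ⟪T (v x), v y⟫_ℂ) := by
  apply aux_posSemidef_of_form
  · ext x y
    simp only [Matrix.conjTranspose_apply, Matrix.of_apply, Complex.star_def,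
      inner_conj_symm]
    exact (hT (v x) (v y)).symm
  · intro c
    have hTf : T (∑ x, c x • v x) = ∑ x, c x • T (v x) := by
      rw [map_sum]
      exact Finset.sum_congr rfl fun x _ => map_smul T _ _
    have e1 : ⟪T (∑ x, c x • v x), ∑ x, c x • v x⟫_ℂ
        = ∑ x, ∑ y, conj (c x) * ⟪T (v x), v y⟫_ℂ * c y := by
      rw [hTf]
      exact aux_expand c (fun x => T (v x)) v
    have := hpos c
    rw [e1] at this
    simpa using this

lemma aux_norm_sq {E : Type*} [NormedAddCommGroup E] [InnerProductSpace ℂ E] (x : E) :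
    (⟪x, x⟫_ℂ).re = ‖x‖ ^ 2 := by
  rw [inner_self_eq_norm_sq_to_K (𝕜 := ℂ)]
  norm_cast


/-- if `(J₁ f, f) ≥ κ₁ ‖f‖²` on a closed subspace `H₁⁺` and
`(J₂ g, g) ≤ −κ₂ ‖g‖²` on a closed subspace `H₂⁻`, then on the closed span of
the elementary tensors `f ⊗ g`, `f ∈ H₁⁺`, `g ∈ H₂⁻`, one has
`((J₁ ⊗ J₂) u, u) ≤ −κ₁ κ₂ ‖u‖²`. -/
theorem tensor_uniformly_negative_subspace
    {H₁ H₂ H : Type*}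
    [NormedAddCommGroup H₁] [InnerProductSpace ℂ H₁] [CompleteSpace H₁]
    [NormedAddCommGroup H₂] [InnerProductSpace ℂ H₂] [CompleteSpace H₂]
    [NormedAddCommGroup H] [InnerProductSpace ℂ H] [CompleteSpace H]
    (tmul : H₁ →ₗ[ℂ] H₂ →ₗ[ℂ] H)
    (hinner : ∀ (f₁ f₂ : H₁) (h₁ h₂ : H₂),
      ⟪tmul f₁ h₁, tmul f₂ h₂⟫_ℂ = ⟪f₁, f₂⟫_ℂ * ⟪h₁, h₂⟫_ℂ)
    (J₁ : H₁ →L[ℂ] H₁) (hJ₁sa : IsSelfAdjoint J₁) (hJ₁2 : J₁ ∘L J₁ = 1)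
    (J₂ : H₂ →L[ℂ] H₂) (hJ₂sa : IsSelfAdjoint J₂) (hJ₂2 : J₂ ∘L J₂ = 1)
    (J : H →L[ℂ] H)
    (hJ : ∀ (f : H₁) (h : H₂), J (tmul f h) = tmul (J₁ f) (J₂ h))
    (H₁p : Submodule ℂ H₁) (hH₁p : IsClosed (H₁p : Set H₁))
    (H₂p : Submodule ℂ H₂) (hH₂p : IsClosed (H₂p : Set H₂))
    (κ₁ κ₂ : ℝ) (hκ₁ : 0 < κ₁) (hκ₂ : 0 < κ₂)
    (h₁ : ∀ f ∈ H₁p, κ₁ * ‖f‖ ^ 2 ≤ (⟪J₁ f, f⟫_ℂ).re)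
    (h₂ : ∀ g ∈ H₂p, (⟪J₂ g, g⟫_ℂ).re ≤ -(κ₂ * ‖g‖ ^ 2))
    (u : H)
    (hu : u ∈ closure
      (Submodule.span ℂ {x : H | ∃ f ∈ H₁p, ∃ g ∈ H₂p, x = tmul f g} : Set H)) :
    (⟪J u, u⟫_ℂ).re ≤ -(κ₁ * κ₂ * ‖u‖ ^ 2) := by
  classical
  have hclosed : IsClosed {w : H | (⟪J w, w⟫_ℂ).re ≤ -(κ₁ * κ₂ * ‖w‖ ^ 2)} := by
    apply isClosed_le
    · exact Complex.continuous_re.comp (Continuous.inner J.continuous continuous_id)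
    · exact (continuous_const.mul ((continuous_norm).pow 2)).neg
  refine (hclosed.closure_subset_iff.mpr ?_) hu
  intro w hw
  simp only [SetLike.mem_coe] at hw
  simp only [Set.mem_setOf_eq]
  obtain ⟨c, hsupp, hsum⟩ := Submodule.mem_span_set.mp hw
  have hmem : ∀ x : ↥c.support, ∃ f ∈ H₁p, ∃ g ∈ H₂p, (x : H) = tmul f g :=
    fun x => hsupp x.2
  choose F hF G hG hfg using hmem
  let n := ↥c.support
  set F' : n → H₁ := fun x => c x • F x with hF'def
  have hF'mem : ∀ x, F' x ∈ H₁p := fun x => H₁p.smul_mem _ (hF x)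
  -- representation of w
  have hwrep : w = ∑ x : n, tmul (F' x) (G x) := by
    rw [← hsum, Finsupp.sum, ← Finset.sum_coe_sort]
    refine Finset.sum_congr rfl fun x _ => ?_
    show c x • (x : H) = tmul (c x • F x) (G x)
    rw [_root_.map_smul, LinearMap.smul_apply, ← hfg x]
  -- symmetric operators
  have hsym₁ : ∀ a b : H₁, ⟪J₁ a, b⟫_ℂ = ⟪a, J₁ b⟫_ℂ :=
    ContinuousLinearMap.isSelfAdjoint_iff_isSymmetric.mp hJ₁sa
  have hsym₂ : ∀ a b : H₂, ⟪J₂ a, b⟫_ℂ = ⟪a, J₂ b⟫_ℂ :=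
    ContinuousLinearMap.isSelfAdjoint_iff_isSymmetric.mp hJ₂sa
  -- the operators entering the four PSD matrices
  set T₁ : H₁ →L[ℂ] H₁ := J₁ - (κ₁ : ℂ) • 1 with hT₁def
  set T₂ : H₂ →L[ℂ] H₂ := -J₂ - (κ₂ : ℂ) • 1 with hT₂def
  have hT₁app : ∀ a b : H₁, ⟪T₁ a, b⟫_ℂ = ⟪J₁ a, b⟫_ℂ - (κ₁ : ℂ) * ⟪a, b⟫_ℂ := by
    intro a b
    rw [hT₁def, ContinuousLinearMap.sub_apply, ContinuousLinearMap.smul_apply,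
      ContinuousLinearMap.one_apply, inner_sub_left, inner_smul_left, Complex.conj_ofReal]
  have hT₂app : ∀ a b : H₂, ⟪T₂ a, b⟫_ℂ = -⟪J₂ a, b⟫_ℂ - (κ₂ : ℂ) * ⟪a, b⟫_ℂ := by
    intro a b
    rw [hT₂def, ContinuousLinearMap.sub_apply, ContinuousLinearMap.smul_apply,
      ContinuousLinearMap.one_apply, ContinuousLinearMap.neg_apply, inner_sub_left,
      inner_neg_left, inner_smul_left, Complex.conj_ofReal]
  have hT₁sym : ∀ a b : H₁, ⟪T₁ a, b⟫_ℂ = ⟪a, T₁ b⟫_ℂ := by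
    intro a b
    have e : ⟪a, T₁ b⟫_ℂ = conj ⟪T₁ b, a⟫_ℂ := (inner_conj_symm a (T₁ b)).symm
    rw [hT₁app a b, e, hT₁app b a, map_sub, _root_.map_mul, Complex.conj_ofReal,
      inner_conj_symm, inner_conj_symm, hsym₁]
  have hT₂sym : ∀ a b : H₂, ⟪T₂ a, b⟫_ℂ = ⟪a, T₂ b⟫_ℂ := by
    intro a b
    have e : ⟪a, T₂ b⟫_ℂ = conj ⟪T₂ b, a⟫_ℂ := (inner_conj_symm a (T₂ b)).symm
    rw [hT₂app a b, e, hT₂app b a, map_sub, map_neg, _root_.map_mul, Complex.conj_ofReal,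
      inner_conj_symm, inner_conj_symm, hsym₂]
  have hNJ₂sym : ∀ a b : H₂, ⟪(-J₂) a, b⟫_ℂ = ⟪a, (-J₂) b⟫_ℂ := by
    intro a b
    simp [inner_neg_left, inner_neg_right, hsym₂]
  -- PSD matrices
  have hP : Matrix.PosSemidef (Matrix.of fun x y : n => ⟪T₁ (F' x), F' y⟫_ℂ) := by
    apply aux_form_psd _ _ hT₁sym
    intro cc
    set f := ∑ x, cc x • F' x with hfdef
    have hfmem : f ∈ H₁p := Submodule.sum_mem _ fun x _ => H₁p.smul_mem _ (hF'mem x)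
    have := h₁ f hfmem
    rw [hT₁app]
    have hre : ((κ₁ : ℂ) * ⟪f, f⟫_ℂ).re = κ₁ * ‖f‖ ^ 2 := by
      rw [Complex.re_ofReal_mul, aux_norm_sq]
    simp only [Complex.sub_re, hre]
    linarith
  have hQ : Matrix.PosSemidef (Matrix.of fun x y : n => ⟪T₂ (G x), G y⟫_ℂ) := by
    apply aux_form_psd _ _ hT₂sym
    intro cc
    set g := ∑ x, cc x • G x with hgdef
    have hgmem : g ∈ H₂p := Submodule.sum_mem _ fun x _ => H₂p.smul_mem _ (hG x)
    have := h₂ g hgmem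
    rw [hT₂app]
    have hre : ((κ₂ : ℂ) * ⟪g, g⟫_ℂ).re = κ₂ * ‖g‖ ^ 2 := by
      rw [Complex.re_ofReal_mul, aux_norm_sq]
    simp only [Complex.sub_re, Complex.neg_re, hre]
    linarith
  have hNB : Matrix.PosSemidef (Matrix.of fun x y : n => ⟪(-J₂) (G x), G y⟫_ℂ) := by
    apply aux_form_psd _ _ hNJ₂sym
    intro cc
    set g := ∑ x, cc x • G x with hgdef
    have hgmem : g ∈ H₂p := Submodule.sum_mem _ fun x _ => H₂p.smul_mem _ (hG x)
    have := h₂ g hgmem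
    have hn2 : 0 ≤ κ₂ * ‖g‖ ^ 2 := by positivity
    simp only [ContinuousLinearMap.neg_apply, inner_neg_left, Complex.neg_re]
    linarith
  have hGm : Matrix.PosSemidef (Matrix.of fun x y : n => ⟪(1 : H₁ →L[ℂ] H₁) (F' x), F' y⟫_ℂ) := by
    apply aux_form_psd
    · intro a b; simp
    · intro cc
      rw [ContinuousLinearMap.one_apply, aux_norm_sq]
      positivity
  -- key inequalities
  have h01 := aux_re_sum_mul_nonneg _ _ hP hNB
  have h02 := aux_re_sum_mul_nonneg _ _ hGm hQ
  -- the three basic complex sums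
  set Sab : ℂ := ∑ x, ∑ y, ⟪J₁ (F' x), F' y⟫_ℂ * ⟪J₂ (G x), G y⟫_ℂ with hSab
  set Sgb : ℂ := ∑ x, ∑ y, ⟪F' x, F' y⟫_ℂ * ⟪J₂ (G x), G y⟫_ℂ with hSgb
  set Sgk : ℂ := ∑ x, ∑ y, ⟪F' x, F' y⟫_ℂ * ⟪G x, G y⟫_ℂ with hSgk
  have E1 : (∑ x, ∑ y, (Matrix.of fun x y : n => ⟪T₁ (F' x), F' y⟫_ℂ) x y
      * (Matrix.of fun x y : n => ⟪(-J₂) (G x), G y⟫_ℂ) x y)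
      = -Sab + (κ₁ : ℂ) * Sgb := by
    rw [hSab, hSgb, ← aux_sum2]
    refine Finset.sum_congr rfl fun x _ => Finset.sum_congr rfl fun y _ => ?_
    simp only [Matrix.of_apply, ContinuousLinearMap.neg_apply, inner_neg_left, hT₁app]
    ring
  have E2 : (∑ x, ∑ y, (Matrix.of fun x y : n => ⟪(1 : H₁ →L[ℂ] H₁) (F' x), F' y⟫_ℂ) x y
      * (Matrix.of fun x y : n => ⟪T₂ (G x), G y⟫_ℂ) x y)
      = -Sgb + (-(κ₂ : ℂ)) * Sgk := by
    rw [hSgb, hSgk, ← aux_sum2]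
    refine Finset.sum_congr rfl fun x _ => Finset.sum_congr rfl fun y _ => ?_
    simp only [Matrix.of_apply, ContinuousLinearMap.one_apply, hT₂app]
    ring
  rw [E1] at h01
  rw [E2] at h02
  -- compute the inner products of w
  have hJw : ⟪J w, w⟫_ℂ = Sab := by
    rw [hwrep, map_sum, hSab]
    rw [aux_inner_sum]
    refine Finset.sum_congr rfl fun x _ => Finset.sum_congr rfl fun y _ => ?_
    rw [hJ, hinner]
  have hww : ⟪w, w⟫_ℂ = Sgk := by
    rw [hwrep, hSgk, aux_inner_sum]
    refine Finset.sum_congr rfl fun x _ => Finset.sum_congr rfl fun y _ => ?_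
    rw [hinner]
  have hnw : ‖w‖ ^ 2 = Sgk.re := by
    rw [← hww, aux_norm_sq]
  -- put everything together
  rw [hJw, hnw]
  have r01 : 0 ≤ -Sab.re + κ₁ * Sgb.re := by
    simpa [Complex.add_re, Complex.neg_re, Complex.re_ofReal_mul] using h01
  have r02 : 0 ≤ -Sgb.re - κ₂ * Sgk.re := by
    have : (-Sgb + (-(κ₂:ℂ)) * Sgk).re = -Sgb.re - κ₂ * Sgk.re := by
      simp [Complex.add_re, Complex.neg_re, Complex.re_ofReal_mul]
      ring
    linarith [this ▸ h02]
  have r03 : 0 ≤ κ₁ * (-Sgb.re - κ₂ * Sgk.re) := mul_nonneg hκ₁.le r02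
  nlinarith [r01, r03]
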